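/- arXiv:0707.4231 — 4 statements merged into one kernel-verified Lean document; each statement's English description precedes it below -/
import Mathlib

section
/- Let (X, d) be a metric space and let (K⁽ⁿ⁾) be a sequence of finite subsets of X, each of cardinality at most k. Then there exists a subsequence and an integer l ≥ 1 such that each set K⁽ⁿ⁾ in the subsequence decomposes as a disjoint union of nonempty subsets K⁽ⁿ⁾ = K⁽ⁿ⁾₁ ∪ … ∪ K⁽ⁿ⁾ₗ with the properties: (1) there is a constant D < ∞ with diam(K⁽ⁿ⁾ᵢ) ≤ D for all i and n; (2) for i ≠ j, dist(K⁽ⁿ⁾ᵢ, K⁽ⁿ⁾ⱼ) → ∞ as n → ∞. -/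
open Filter Metric

private lemma subseq_dichotomy (d : ℕ → ℝ) :
    ∃ ψ : ℕ → ℕ, StrictMono ψ ∧
      ((∃ R, ∀ n, d (ψ n) ≤ R) ∨ Tendsto (fun n => d (ψ n)) atTop atTop) := by
  by_cases h : ∃ R : ℝ, ∃ᶠ n in atTop, d n ≤ R
  · obtain ⟨R, hR⟩ := h
    obtain ⟨ψ, hψ, h2⟩ := Filter.extraction_of_frequently_atTop hR
    exact ⟨ψ, hψ, Or.inl ⟨R, h2⟩⟩
  · push_neg at h
    refine ⟨id, strictMono_id, Or.inr ?_⟩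
    refine tendsto_atTop.2 fun R => ?_
    have h2 := h R
    exact h2.mono fun n hn => le_of_lt hn

private lemma subseq_dichotomy_list {α : Type*} (d : α → ℕ → ℝ) (L : List α) :
    ∃ ψ : ℕ → ℕ, StrictMono ψ ∧ ∀ p ∈ L,
      ((∃ R, ∀ n, d p (ψ n) ≤ R) ∨ Tendsto (fun n => d p (ψ n)) atTop atTop) := by
  induction L with
  | nil => exact ⟨id, strictMono_id, by simp⟩
  | cons p L ih =>
    obtain ⟨ψ, hψ, hL⟩ := ih
    obtain ⟨ψ', hψ', hp⟩ := subseq_dichotomy (fun n => d p (ψ n))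
    refine ⟨ψ ∘ ψ', hψ.comp hψ', ?_⟩
    intro q hq
    rcases List.mem_cons.1 hq with rfl | hq
    · exact hp
    · rcases hL q hq with ⟨R, hR⟩ | ht
      · exact Or.inl ⟨R, fun n => hR (ψ' n)⟩
      · exact Or.inr (ht.comp hψ'.tendsto_atTop)

/-- Lemma 3.3 (break-up lemma): a sequence of finite subsets of uniformly bounded
cardinality in a metric space subconverges to a decomposition into pieces of uniformly
bounded diameter whose mutual distances diverge. -/
theorem finset_sequence_breakup
    {X : Type*} [MetricSpace X] (k : ℕ) (K : ℕ → Finset X)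
    (hcard : ∀ n, (K n).card ≤ k) (hne : ∀ n, (K n).Nonempty) :
    ∃ (φ : ℕ → ℕ), StrictMono φ ∧
    ∃ (l : ℕ), 1 ≤ l ∧
    ∃ (P : ℕ → Fin l → Finset X),
      (∀ n i, (P n i).Nonempty) ∧
      (∀ n, ∀ i j : Fin l, i ≠ j → Disjoint (P n i) (P n j)) ∧
      (∀ n, (↑(K (φ n)) : Set X) = ⋃ i, (↑(P n i) : Set X)) ∧
      (∃ D : ℝ, ∀ n, ∀ i : Fin l, Metric.diam (↑(P n i) : Set X) ≤ D) ∧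
      (∀ i j : Fin l, i ≠ j → ∀ R : ℝ, ∃ N : ℕ, ∀ n ≥ N,
        ∀ x ∈ P n i, ∀ y ∈ P n j, R ≤ dist x y) := by
  classical
  -- Step 1: constant cardinality subsequence
  obtain ⟨m', hm'⟩ := Finite.exists_infinite_fiber
    (fun n => (⟨(K n).card, Nat.lt_succ_of_le (hcard n)⟩ : Fin (k+1)))
  set m : ℕ := m'.1 with hmdef
  have hfreq : ∃ᶠ n in atTop, (K n).card = m := by
    rw [Nat.frequently_atTop_iff_infinite]
    have := Set.infinite_coe_iff.1 hm'
    refine this.mono ?_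
    intro n hn
    simp only [Set.mem_preimage, Set.mem_singleton_iff] at hn
    simpa [hmdef] using congrArg Fin.val hn
  obtain ⟨φ₀, hφ₀, hm⟩ := Filter.extraction_of_frequently_atTop hfreq
  have hmpos : 0 < m := by
    have := (hne (φ₀ 0)).card_pos
    rw [hm 0] at this; exact this
  -- enumeration
  set y : ∀ n, Fin m → X := fun n i =>
    ((K (φ₀ n)).equivFin.symm (Fin.cast (hm n).symm i) : X) with hy
  have hymem : ∀ n i, y n i ∈ K (φ₀ n) := fun n i => Finset.coe_mem _
  have hyinj : ∀ n, Function.Injective (y n) := by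
    intro n i j hij
    have h2 := (K (φ₀ n)).equivFin.symm.injective (Subtype.ext hij)
    have h3 := congrArg Fin.val h2
    exact Fin.ext (by simpa using h3)
  have hysurj : ∀ n, ∀ x ∈ K (φ₀ n), ∃ i, y n i = x := by
    intro n x hx
    refine ⟨Fin.cast (hm n) ((K (φ₀ n)).equivFin ⟨x, hx⟩), ?_⟩
    simp [hy, Fin.cast_cast]
  -- Step 2: dichotomy for all pairs
  obtain ⟨ψ, hψ, hdich⟩ := subseq_dichotomy_list
    (fun (p : Fin m × Fin m) n => dist (y n p.1) (y n p.2))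
    (Finset.univ : Finset (Fin m × Fin m)).toList
  set z : ℕ → Fin m → X := fun n => y (ψ n) with hz
  have hdich' : ∀ a b : Fin m,
      (∃ R, ∀ n, dist (z n a) (z n b) ≤ R) ∨
        Tendsto (fun n => dist (z n a) (z n b)) atTop atTop := by
    intro a b
    exact hdich (a, b) (Finset.mem_toList.2 (Finset.mem_univ _))
  -- the boundedness equivalence relation
  set s : Setoid (Fin m) :=
    { r := fun a b => ∃ R, ∀ n, dist (z n a) (z n b) ≤ R
      iseqv := by
        refine ⟨fun a => ⟨0, fun n => by simp⟩, ?_, ?_⟩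
        · rintro a b ⟨R, hR⟩
          exact ⟨R, fun n => by rw [dist_comm]; exact hR n⟩
        · rintro a b c ⟨R1, h1⟩ ⟨R2, h2⟩
          exact ⟨R1 + R2, fun n =>
            (dist_triangle _ (z n b) _).trans (add_le_add (h1 n) (h2 n))⟩ } with hs
  have htend : ∀ a b : Fin m, ¬ s.r a b →
      Tendsto (fun n => dist (z n a) (z n b)) atTop atTop := by
    intro a b hab
    rcases hdich' a b with h | h
    · exact absurd h hab
    · exact h
  haveI : Finite (Quotient s) := Quotient.finite s
  haveI : Fintype (Quotient s) := Fintype.ofFinite _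
  set l : ℕ := Fintype.card (Quotient s) with hl
  have hl1 : 1 ≤ l := Fintype.card_pos_iff.2
    ⟨Quotient.mk s ⟨0, hmpos⟩⟩
  set e : Quotient s ≃ Fin l := Fintype.equivFin (Quotient s) with he
  -- eventual separation
  have hsep : ∀ᶠ n in atTop, ∀ a b : Fin m, ¬ s.r a b →
      1 ≤ dist (z n a) (z n b) := by
    rw [eventually_all]
    intro a
    rw [eventually_all]
    intro b
    by_cases hab : s.r a b
    · exact Eventually.of_forall fun n h => absurd hab h
    · exact ((htend a b hab).eventually_ge_atTop 1).mono fun n h _ => h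
  obtain ⟨N, hN⟩ := eventually_atTop.1 hsep
  -- final subsequence and pieces
  set φ : ℕ → ℕ := fun n => φ₀ (ψ (n + N)) with hφdef
  have hφ : StrictMono φ := hφ₀.comp (hψ.comp fun a b h => by omega)
  set P : ℕ → Fin l → Finset X := fun n i =>
    (Finset.univ.filter (fun a : Fin m => e (Quotient.mk s a) = i)).image
      (fun a => z (n + N) a) with hP
  have hKφ : ∀ n, K (φ n) = K (φ₀ (ψ (n + N))) := fun n => rfl
  have hzmem : ∀ n a, z (n + N) a ∈ K (φ n) := fun n a => hymem _ _
  refine ⟨φ, hφ, l, hl1, P, ?_, ?_, ?_, ?_, ?_⟩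
  · -- nonempty
    intro n i
    obtain ⟨a, ha⟩ := Quotient.exists_rep (e.symm i)
    exact ⟨z (n + N) a, Finset.mem_image.2 ⟨a,
      Finset.mem_filter.2 ⟨Finset.mem_univ _, by rw [ha]; simp⟩, rfl⟩⟩
  · -- disjoint
    intro n i j hij
    rw [Finset.disjoint_left]
    rintro x hx hx'
    obtain ⟨a, ha, rfl⟩ := Finset.mem_image.1 hx
    obtain ⟨b, hb, hba⟩ := Finset.mem_image.1 hx'
    rw [Finset.mem_filter] at ha hb
    by_cases hab : s.r a b
    · exact hij (ha.2 ▸ hb.2 ▸ congrArg e (Quotient.sound hab))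
    · have h1 := hN (n + N) (by omega) a b hab
      rw [← hba, dist_self] at h1
      linarith
  · -- union
    intro n
    ext x
    simp only [Finset.coe_image, Set.mem_iUnion, Finset.mem_coe]
    constructor
    · intro hx
      obtain ⟨a, ha⟩ := hysurj (ψ (n + N)) x hx
      exact ⟨e (Quotient.mk s a), Finset.mem_image.2 ⟨a,
        Finset.mem_filter.2 ⟨Finset.mem_univ _, rfl⟩, ha⟩⟩
    · rintro ⟨i, hx⟩
      obtain ⟨a, _, rfl⟩ := Finset.mem_image.1 hx
      exact hzmem n a
  · -- diameter bound
    set g : Fin m → Fin m → ℝ := fun a b =>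
      if h : s.r a b then h.choose else 0 with hg
    have hgspec : ∀ a b, s.r a b → ∀ n', dist (z n' a) (z n' b) ≤ g a b := by
      intro a b hab n'
      rw [hg]
      simp only [dif_pos hab]
      exact hab.choose_spec n'
    set D : ℝ := ∑ p : Fin m × Fin m, |g p.1 p.2| with hD
    have hD0 : 0 ≤ D := Finset.sum_nonneg fun _ _ => abs_nonneg _
    have hgD : ∀ a b, g a b ≤ D := fun a b =>
      (le_abs_self _).trans (Finset.single_le_sum
        (f := fun p : Fin m × Fin m => |g p.1 p.2|)
        (fun _ _ => abs_nonneg _) (Finset.mem_univ (a, b)))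
    refine ⟨D, fun n i => Metric.diam_le_of_forall_dist_le hD0 ?_⟩
    rintro x hx x' hx'
    obtain ⟨a, ha, rfl⟩ := Finset.mem_image.1 (Finset.mem_coe.1 hx)
    obtain ⟨b, hb, rfl⟩ := Finset.mem_image.1 (Finset.mem_coe.1 hx')
    rw [Finset.mem_filter] at ha hb
    have hab : s.r a b := Quotient.exact (e.injective (ha.2.trans hb.2.symm))
    exact (hgspec a b hab _).trans (hgD a b)
  · -- divergence
    intro i j hij R
    have hev : ∀ᶠ n' in atTop, ∀ a b : Fin m,
        e (Quotient.mk s a) = i → e (Quotient.mk s b) = j →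
          R ≤ dist (z n' a) (z n' b) := by
      rw [eventually_all]
      intro a
      rw [eventually_all]
      intro b
      by_cases ha : e (Quotient.mk s a) = i
      · by_cases hb : e (Quotient.mk s b) = j
        · have hab : ¬ s.r a b := by
            intro h
            exact hij (ha ▸ hb ▸ congrArg e (Quotient.sound h))
          exact ((htend a b hab).eventually_ge_atTop R).mono
            fun n' h _ _ => h
        · exact Eventually.of_forall fun n' _ h => absurd h hb
      · exact Eventually.of_forall fun n' h => absurd h ha
    obtain ⟨N', hN'⟩ := eventually_atTop.1 hev
    refine ⟨N', fun n hn x hx y' hy' => ?_⟩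
    obtain ⟨a, ha, rfl⟩ := Finset.mem_image.1 hx
    obtain ⟨b, hb, rfl⟩ := Finset.mem_image.1 hy'
    rw [Finset.mem_filter] at ha hb
    exact hN' (n + N) (by omega) a b ha.2 hb.2
end

section
/- Let Γ be a finite connected graph whose vertex set is partitioned into two classes: 'K-vertices' K₁,…,K_l and 'C-vertices' C₁,…,C_m, such that every edge joins a K-vertex to a C-vertex (Γ is bipartite). Suppose Γ has no multiple edges and satisfies the following separation property: whenever two C-vertices C and C' are both adjacent to the same K-vertex Kᵢ, any path in Γ from C to C' avoiding Kᵢ must pass through some other K-vertex Kⱼ adjacent to both C and C'. If additionally any two C-vertices adjacent to a common K-vertex Kᵢ and connected in Γ ∖ {Kᵢ} coincide, then Γ is a tree. -/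
private lemma walk_reach_induce {V : Type*} {Γ : SimpleGraph V} (k : V) :
    ∀ {a b : V} (w : Γ.Walk a b), k ∉ w.support →
      ∀ (ha : a ≠ k) (hb : b ≠ k),
      (Γ.induce {v : V | v ≠ k}).Reachable ⟨a, ha⟩ ⟨b, hb⟩ := by
  intro a b w
  induction w with
  | nil =>
    intro _ ha hb
    exact SimpleGraph.Reachable.refl _
  | @cons u x y h w ih =>
    intro hk ha hb
    simp only [SimpleGraph.Walk.support_cons, List.mem_cons, not_or] at hk
    have hx : x ≠ k := fun hxk => hk.2 (hxk ▸ w.start_mem_support)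
    have hadj : (Γ.induce {v : V | v ≠ k}).Adj ⟨u, ha⟩ ⟨x, hx⟩ := h
    exact hadj.reachable.trans (ih hk.2 hx hb)

/-- Lemma 3.4: the dual graph is a tree. Let `Γ` be a finite connected simple graph whose
vertices split into `K`-vertices and `C`-vertices (`isK`), every edge joining a
`K`-vertex to a `C`-vertex. If any two `C`-vertices adjacent to a common `K`-vertex `k`
which are connected in `Γ ∖ {k}` coincide, then `Γ` is a tree. -/
theorem dual_graph_is_tree
    {V : Type*} [Fintype V] (Γ : SimpleGraph V) (hconn : Γ.Connected)
    (isK : V → Prop)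
    (hbip : ∀ u v : V, Γ.Adj u v → (isK u ↔ ¬ isK v))
    (hsep : ∀ (k : V), isK k → ∀ (c c' : {v : V // v ≠ k}),
      ¬ isK c.1 → ¬ isK c'.1 → Γ.Adj k c.1 → Γ.Adj k c'.1 →
      (Γ.induce {v : V | v ≠ k}).Reachable c c' → c = c') :
    Γ.IsTree := by
  classical
  refine ⟨hconn, ?_⟩
  have key : ∀ (k : V), isK k → ∀ (p : Γ.Walk k k), ¬ p.IsCycle := by
    intro k hk p hp
    cases p with
    | nil => exact hp.ne_nil rfl
    | @cons _ c' _ h q =>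
      -- h : Γ.Adj k c', q : Γ.Walk c' k
      have hq : q.support.Nodup := by
        have := hp.support_nodup
        simpa using this
      obtain ⟨c, h', r, hrev⟩ := q.reverse.exists_eq_cons_of_ne h.ne'.symm
      -- h' : Γ.Adj k c, r : Γ.Walk c c'
      have hqeq : q = r.reverse.concat h'.symm := by
        have := congrArg SimpleGraph.Walk.reverse hrev
        simpa [SimpleGraph.Walk.concat] using this
      have hsupq : q.support = r.reverse.support.concat k := by
        rw [hqeq, SimpleGraph.Walk.support_concat, List.concat_eq_append]
      rw [hsupq] at hq
      simp only [List.concat_eq_append, List.nodup_append, List.nodup_cons] at hq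
      have hknr : k ∉ r.support := by
        intro hmem
        exact hq.2.2 k (by simpa [SimpleGraph.Walk.support_reverse] using hmem) k (by simp) rfl
      have hck : c ≠ k := h'.ne'
      have hc'k : c' ≠ k := h.ne'
      have hreach := walk_reach_induce k r hknr hck hc'k
      have hcC : ¬ isK c := (hbip k c h').mp hk
      have hc'C : ¬ isK c' := (hbip k c' h).mp hk
      have heq := hsep k hk ⟨c, hck⟩ ⟨c', hc'k⟩ hcC hc'C h' h hreach
      have hcc' : c = c' := congrArg Subtype.val heq
      subst hcc'
      have hrpath : r.reverse.IsPath := SimpleGraph.Walk.IsPath.mk' hq.1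
      have hrnil : r.reverse = SimpleGraph.Walk.nil := (SimpleGraph.Walk.isPath_iff_eq_nil).mp hrpath
      have hrlen : r.length = 0 := by
        have := congrArg SimpleGraph.Walk.length hrnil
        simpa using this
      have h3 := hp.three_le_length
      have : q.length = 1 := by
        rw [hqeq]
        simp [hrlen]
      simp [SimpleGraph.Walk.length_cons, this] at h3
  intro v p hp
  by_cases hv : isK v
  · exact key v hv p hp
  · cases p with
    | nil => exact hp.ne_nil rfl
    | @cons _ u _ h q =>
      have hu : isK u := by
        by_contra hnu
        exact hv ((hbip v u h).mpr hnu)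
      have hmem : u ∈ (SimpleGraph.Walk.cons h q).support := by
        simp [SimpleGraph.Walk.support_cons]
      exact key u hu _ (hp.rotate hmem)
end

section
/- Let T be a graph whose vertices are the 'indecomposable sets' V and whose edges are 'walls' W, where each wall W partitions the ambient connected space M ∖ (union of all walls) into a positive side W⁺ and a negative side W⁻, no wall separates two points of another wall, and each wall is adjacent to exactly two indecomposable sets (one in W⁺, one in W⁻). Then T contains no embedded cycles; together with connectedness of M implying connectedness of T, T is a tree. -/
open Set

/-- Lemma 8.3: the graph `T` whose vertices are the indecomposable sets (`piece v`) and
whose edges are the walls (`W i`, with sides `Wp i`, `Wm i` and adjacent indecomposable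
sets `endP i`, `endM i`) contains no embedded cycles; together with connectedness, `T`
is a tree. -/
theorem wall_graph_is_tree
    {M : Type*} [TopologicalSpace M] [ConnectedSpace M]
    {ι : Type*} {V : Type*}
    (W Wp Wm : ι → Set M) (piece : V → Set M) (endP endM : ι → V)
    -- each wall splits the space into the wall and its two open sides
    (hcover : ∀ i, W i ∪ Wp i ∪ Wm i = univ)
    (hWclosed : ∀ i, IsClosed (W i)) (hWpopen : ∀ i, IsOpen (Wp i)) (hWmopen : ∀ i, IsOpen (Wm i))
    (hdisj₁ : ∀ i, Disjoint (Wp i) (Wm i)) (hdisj₂ : ∀ i, Disjoint (W i) (Wp i ∪ Wm i))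
    -- no wall separates two points of another wall
    (hnosep : ∀ i j, i ≠ j → W j ⊆ Wp i ∪ W i ∨ W j ⊆ Wm i ∪ W i)
    -- the pieces are nonempty, avoid all walls, and are not separated by any wall
    (hne : ∀ v, (piece v).Nonempty)
    (hoff : ∀ v i, Disjoint (piece v) (W i))
    (hunsep : ∀ v i, piece v ⊆ Wp i ∨ piece v ⊆ Wm i)
    -- every point lies on a wall or in a piece
    (hall : ∀ x : M, (∃ i, x ∈ W i) ∨ (∃ v, x ∈ piece v))
    -- closures of pieces are path connected
    (hpath : ∀ v, ∀ x ∈ closure (piece v), ∀ y ∈ closure (piece v),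
      JoinedIn (closure (piece v)) x y)
    -- each wall is adjacent to exactly two pieces, one on each side
    (hendP : ∀ i, piece (endP i) ⊆ Wp i ∧ W i ⊆ closure (piece (endP i)))
    (hendM : ∀ i, piece (endM i) ⊆ Wm i ∧ W i ⊆ closure (piece (endM i)))
    (hexact : ∀ i v, (W i ∩ closure (piece v)).Nonempty → v = endP i ∨ v = endM i) :
    (SimpleGraph.fromRel (fun u v : V => ∃ i, endP i = u ∧ endM i = v)).IsAcyclic ∧
    ((SimpleGraph.fromRel (fun u v : V => ∃ i, endP i = u ∧ endM i = v)).Connected →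
      (SimpleGraph.fromRel (fun u v : V => ∃ i, endP i = u ∧ endM i = v)).IsTree) := by

  classical
  set G := SimpleGraph.fromRel (fun u v : V => ∃ i, endP i = u ∧ endM i = v) with hG
  -- a piece cannot be on both sides of a wall
  have hsided : ∀ v i, piece v ⊆ Wp i → ¬ piece v ⊆ Wm i := by
    intro v i h1 h2
    obtain ⟨x, hx⟩ := hne v
    exact (hdisj₁ i).le_bot ⟨h1 hx, h2 hx⟩
  -- every wall is nonempty
  have hWne : ∀ j, (W j).Nonempty := by
    intro j
    by_contra hempty
    rw [Set.not_nonempty_iff_eq_empty] at hempty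
    have hcov : (univ : Set M) ⊆ Wp j ∪ Wm j := by
      rw [← hcover j, hempty]
      intro x hx
      simpa using hx
    obtain ⟨xP, hxP⟩ := hne (endP j)
    obtain ⟨xM, hxM⟩ := hne (endM j)
    obtain ⟨x, -, hx1, hx2⟩ := isPreconnected_univ (Wp j) (Wm j) (hWpopen j) (hWmopen j) hcov
      ⟨xP, mem_univ _, (hendP j).1 hxP⟩ ⟨xM, mem_univ _, (hendM j).1 hxM⟩
    exact (hdisj₁ j).le_bot ⟨hx1, hx2⟩
  -- an open set disjoint from a set is disjoint from its closure
  have hopcl : ∀ (s t : Set M), IsOpen s → Disjoint s t → s ∩ closure t = ∅ := by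
    intro s t hs hst
    ext x
    simp only [mem_inter_iff, mem_empty_iff_false, iff_false, not_and]
    intro hxs hxc
    obtain ⟨y, hy1, hy2⟩ := mem_closure_iff.mp hxc s hs hxs
    exact hst.le_bot ⟨hy1, hy2⟩
  -- key lemma: an edge crossing wall i must be the edge of wall i itself
  have key : ∀ i u v, G.Adj u v → piece u ⊆ Wp i → piece v ⊆ Wm i →
      u = endP i ∧ v = endM i := by
    intro i u v huv hu hv
    obtain ⟨hne', hj⟩ := huv
    have core : ∀ j, j ≠ i → W j ⊆ closure (piece u) → W j ⊆ closure (piece v) →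
        u = endP i ∧ v = endM i := by
      intro j hji hju hjv
      have hWjWi : W j ⊆ W i := by
        have h1 : W j ∩ Wp i = ∅ := by
          have := hopcl (Wp i) (piece v) (hWpopen i)
            (Set.disjoint_left.mpr fun x hx hxm => (hdisj₁ i).le_bot ⟨hx, hv hxm⟩)
          rw [← Set.subset_empty_iff, ← this]
          exact fun x hx => ⟨hx.2, hjv hx.1⟩
        have h2 : W j ∩ Wm i = ∅ := by
          have hd : Disjoint (Wm i) (piece u) :=
            Set.disjoint_left.mpr fun x hx hxm => (hdisj₁ i).le_bot ⟨hu hxm, hx⟩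
          have := hopcl (Wm i) (piece u) (hWmopen i) hd
          rw [← Set.subset_empty_iff, ← this]
          exact fun x hx => ⟨hx.2, hju hx.1⟩
        rcases hnosep i j (Ne.symm hji) with hsub | hsub
        · intro x hx
          rcases hsub hx with h | h
          · exact absurd (Set.mem_inter hx h) (by rw [h1]; exact fun h => h)
          · exact h
        · intro x hx
          rcases hsub hx with h | h
          · exact absurd (Set.mem_inter hx h) (by rw [h2]; exact fun h => h)
          · exact h
      obtain ⟨x, hx⟩ := hWne j
      have hu' : u = endP i ∨ u = endM i := hexact i u ⟨x, hWjWi hx, hju hx⟩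
      have hv' : v = endP i ∨ v = endM i := hexact i v ⟨x, hWjWi hx, hjv hx⟩
      constructor
      · rcases hu' with h | h
        · exact h
        · exact absurd (h ▸ hu) (fun hc => hsided (endM i) i hc (hendM i).1)
      · rcases hv' with h | h
        · exact absurd (hendP i).1 (h ▸ (fun hp => hsided v i hp hv))
        · exact h
    rcases hj with ⟨j, hj1, hj2⟩ | ⟨j, hj1, hj2⟩
    · by_cases hji : j = i
      · exact ⟨hji ▸ hj1.symm, hji ▸ hj2.symm⟩
      · exact core j hji (hj1 ▸ (hendP j).2) (hj2 ▸ (hendM j).2)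
    · by_cases hji : j = i
      · exfalso
        exact hsided v i (hji ▸ hj1 ▸ (hendP j).1) hv
      · exact core j hji (hj2 ▸ (hendM j).2) (hj1 ▸ (hendP j).2)
  -- along a walk avoiding the edge of wall i, the side w.r.t. wall i is constant
  have walkside : ∀ (i : ι) (x y : V) (p : G.Walk x y),
      s(endP i, endM i) ∉ p.edges → (piece x ⊆ Wp i ↔ piece y ⊆ Wp i) := by
    intro i x y p
    induction p with
    | nil => intro _; rfl
    | @cons x z y h p ih =>
      intro hnot
      simp only [SimpleGraph.Walk.edges_cons, List.mem_cons] at hnot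
      push_neg at hnot
      have step : piece x ⊆ Wp i ↔ piece z ⊆ Wp i := by
        constructor
        · intro hx
          rcases hunsep z i with hz | hz
          · exact hz
          · obtain ⟨h1, h2⟩ := key i x z h hx hz
            exact absurd (by rw [h1, h2]) hnot.1
        · intro hz
          rcases hunsep x i with hx | hx
          · exact hx
          · obtain ⟨h1, h2⟩ := key i z x h.symm hz hx
            exact absurd (by rw [h1, h2]; exact Sym2.eq_swap) hnot.1
      exact step.trans (ih hnot.2)
  have hacyc : G.IsAcyclic := by
    intro a c hc
    cases c with
    | nil => exact hc.ne_nil rfl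
    | @cons _ b _ h p =>
      have htrail := hc.isTrail
      rw [SimpleGraph.Walk.isTrail_def, SimpleGraph.Walk.edges_cons] at htrail
      have hnotmem : s(a, b) ∉ p.edges := (List.nodup_cons.mp htrail).1
      obtain ⟨hab, hj⟩ := h
      rcases hj with ⟨i, hi1, hi2⟩ | ⟨i, hi1, hi2⟩
      · have ha : piece a ⊆ Wp i := hi1 ▸ (hendP i).1
        have hb : piece b ⊆ Wm i := hi2 ▸ (hendM i).1
        have hnm : s(endP i, endM i) ∉ p.edges := by rwa [hi1, hi2]
        have := (walkside i b a p hnm).mpr ha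
        exact hsided b i this hb
      · have ha : piece a ⊆ Wm i := hi2 ▸ (hendM i).1
        have hb : piece b ⊆ Wp i := hi1 ▸ (hendP i).1
        have hnm : s(endP i, endM i) ∉ p.edges := by
          rw [hi1, hi2]; rwa [Sym2.eq_swap]
        have := (walkside i b a p hnm).mp hb
        exact hsided a i this ha
  exact ⟨hacyc, fun hconn => ⟨hconn, hacyc⟩⟩
end

section
/- Let G act cocompactly by isometries on a metric space M (i.e., there exists r ≥ 0 with M = B_r(G·x₀) for some x₀), and let V ⊆ M be a G-invariant subset contained in a set W⁺ whose complement contains an unbounded set W⁻ with W⁻ ∖ B_s(V) ≠ ∅ for every s (W⁻ is not contained in any bounded neighborhood of V). Then V cannot satisfy M = B_r(V) for any r; consequently, a G-invariant indecomposable set cannot exist, i.e., the action of G on the tree T has no global fixed vertex. -/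
open Set Pointwise

/-- The "no global fixed vertex" step: if `G` acts cocompactly by isometries on a metric
space `M`, and `V` is a nonempty `G`-invariant set contained in a half-space `W⁺` whose
opposite side `W⁻` escapes every bounded neighborhood of `V`, then we reach a
contradiction; in particular `M = B_r(V)` fails for every `r`, and no `G`-invariant
indecomposable set (fixed vertex of the tree `T`) can exist. -/
theorem no_invariant_indecomposable_set
    {G M : Type*} [Group G] [MetricSpace M] [MulAction G M]
    (hisom : ∀ (g : G) (x y : M), dist (g • x) (g • y) = dist x y)
    (x₀ : M) (r : ℝ) (hcocompact : ∀ y : M, ∃ g : G, dist y (g • x₀) ≤ r)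
    (V Wp Wm : Set M)
    (hVinv : ∀ g : G, g • V = V) (hVne : V.Nonempty)
    (hVsub : V ⊆ Wp) (hdisj : Disjoint Wp Wm)
    (hesc : ∀ s : ℝ, ∃ y ∈ Wm, ∀ x ∈ V, s < dist y x) :
    False := by
  obtain ⟨v, hv⟩ := hVne
  obtain ⟨y, -, hy⟩ := hesc (r + dist x₀ v)
  obtain ⟨g, hg⟩ := hcocompact y
  have hgv : g • v ∈ V := by
    rw [← hVinv g]; exact Set.smul_mem_smul_set hv
  have h1 := hy (g • v) hgv
  have h2 : dist y (g • v) ≤ dist y (g • x₀) + dist (g • x₀) (g • v) :=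
    dist_triangle _ _ _
  rw [hisom] at h2
  linarith
end
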